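/- Let p, q be distinct primes, ω = e^{2πi/(pq)}, and let M ∈ M_{p+q}(ℤ/pqℤ) (rows and columns indexed by ℤ/(p+q)ℤ) be such that U = (ω^{M_{ij}}) is a complex Hadamard matrix. For distinct i, j set L_{ij}(k) = M_{jk} − M_{ik}. Then for all distinct i, j there exist an element r ∈ ℤ/pqℤ and a partition ℤ/(p+q)ℤ = P ⊔ Q ⊔ R such that: #R = 2 and L_{ij}(k) = r for all k ∈ R; #P = p−1 and L_{ij} restricted to P is a bijection onto (r + q·(ℤ/pqℤ)) \ {r}; #Q = q−1 and L_{ij} restricted to Q is a bijection onto (r + p·(ℤ/pqℤ)) \ {r}. -/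

import Mathlib

open Complex Matrix

/-- A complex Hadamard matrix: unimodular entries and pairwise orthogonal rows. -/
def IsHadamard {n : ℕ} [NeZero n] (H : Matrix (ZMod n) (ZMod n) ℂ) : Prop :=
  (∀ i j, ‖H i j‖ = 1) ∧ H * Hᴴ = (n : ℂ) • 1

/-- An admissible decomposition for the row-difference function `L = L_{ij}`:
a partition `ℤ/(p+q)ℤ = P ⊔ Q ⊔ R` and `r ∈ ℤ/pqℤ` such that `L ≡ r` on the
two-element set `R`, `L` restricted to `P` (of cardinality `p-1`) is a bijection onto
`(r + q·(ℤ/pqℤ)) \ {r}`, and `L` restricted to `Q` (of cardinality `q-1`) is a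
bijection onto `(r + p·(ℤ/pqℤ)) \ {r}`. -/
def AdmissibleDecomp (p q : ℕ) [NeZero (p + q)]
    (L : ZMod (p + q) → ZMod (p * q))
    (P Q R : Finset (ZMod (p + q))) (r : ZMod (p * q)) : Prop :=
  Disjoint P Q ∧ Disjoint P R ∧ Disjoint Q R ∧ P ∪ Q ∪ R = Finset.univ ∧
  R.card = 2 ∧ (∀ k ∈ R, L k = r) ∧
  P.card = p - 1 ∧
  Set.BijOn L ↑P (Set.range (fun t : ZMod (p * q) => r + (q : ZMod (p * q)) * t) \ {r}) ∧
  Q.card = q - 1 ∧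
  Set.BijOn L ↑Q (Set.range (fun t : ZMod (p * q) => r + (p : ZMod (p * q)) * t) \ {r})

namespace RowsAux

/-- The CRT-style parametrization `(s,t) ↦ q s + p t` of `ZMod (p*q)`. -/
noncomputable def phi (p q : ℕ) (st : ZMod p × ZMod q) : ZMod (p * q) :=
  ((q * st.1.val + p * st.2.val : ℕ) : ZMod (p * q))

section Basic

variable {p q : ℕ} (hp : p.Prime) (hq : q.Prime) (hpq : p ≠ q)

lemma mul_cast_congr (m n : ℕ) (h : m ≡ n [MOD p]) :
    ((q * m : ℕ) : ZMod (p * q)) = (q : ZMod (p * q)) * (n : ℕ) := by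
  have h2 : q * m ≡ q * n [MOD q * p] := h.mul_left' q
  rw [mul_comm q p] at h2
  have := (ZMod.natCast_eq_natCast_iff _ _ _).mpr h2
  rw [this]; push_cast; ring

lemma mul_cast_congr' (m n : ℕ) (h : m ≡ n [MOD q]) :
    ((p * m : ℕ) : ZMod (p * q)) = (p : ZMod (p * q)) * (n : ℕ) := by
  have h2 : p * m ≡ p * n [MOD p * q] := h.mul_left' p
  have := (ZMod.natCast_eq_natCast_iff _ _ _).mpr h2
  rw [this]; push_cast; ring

lemma sum_val {n : ℕ} [NeZero n] (f : ℕ → ℂ) :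
    ∑ x : ZMod n, f x.val = ∑ i ∈ Finset.range n, f i := by
  apply Finset.sum_nbij' (i := fun (x : ZMod n) => x.val) (j := fun (i : ℕ) => (i : ZMod n))
  · intro a _; exact Finset.mem_range.mpr (ZMod.val_lt a)
  · intro a _; exact Finset.mem_univ _
  · intro a _; simp [ZMod.natCast_val, ZMod.cast_id]
  · intro a ha; exact ZMod.val_cast_of_lt (Finset.mem_range.mp ha)
  · intro a _; rfl

include hp hq hpq in
lemma phi_inj : Function.Injective (phi p q) := by
  haveI : NeZero p := ⟨hp.ne_zero⟩
  haveI : NeZero q := ⟨hq.ne_zero⟩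
  haveI : Fact p.Prime := ⟨hp⟩
  haveI : Fact q.Prime := ⟨hq⟩
  intro ⟨s, t⟩ ⟨s', t'⟩ h
  unfold phi at h
  have hqp : (q : ZMod p) ≠ 0 := by
    rw [Ne, ZMod.natCast_eq_zero_iff]
    intro hd
    exact hpq ((Nat.prime_dvd_prime_iff_eq hp hq).mp hd)
  have hpq' : (p : ZMod q) ≠ 0 := by
    rw [Ne, ZMod.natCast_eq_zero_iff]
    intro hd
    exact hpq ((Nat.prime_dvd_prime_iff_eq hq hp).mp hd).symm
  have h1 := congrArg (ZMod.castHom (dvd_mul_right p q) (ZMod p)) h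
  have h2 := congrArg (ZMod.castHom (dvd_mul_left q p) (ZMod q)) h
  rw [map_natCast, map_natCast] at h1 h2
  push_cast [ZMod.natCast_self, ZMod.natCast_val, ZMod.cast_id] at h1 h2
  simp only [zero_mul, mul_zero, add_zero, zero_add] at h1 h2
  have hs : s = s' := mul_left_cancel₀ hqp h1
  have ht : t = t' := mul_left_cancel₀ hpq' h2
  simp [hs, ht]

include hp hq hpq in
lemma phi_bij : Function.Bijective (phi p q) := by
  haveI : NeZero p := ⟨hp.ne_zero⟩
  haveI : NeZero q := ⟨hq.ne_zero⟩
  haveI : NeZero (p * q) := ⟨Nat.mul_ne_zero hp.ne_zero hq.ne_zero⟩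
  rw [Fintype.bijective_iff_injective_and_card]
  refine ⟨phi_inj hp hq hpq, ?_⟩
  simp [ZMod.card]

end Basic

/-- Linear independence of the products of powers of the two prime-order roots. -/
lemma indep {N : ℕ} {p q : ℕ} (hp : p.Prime) (hq : q.Prime) (hpq : p ≠ q)
    (hN : N = p * q) (ω : ℂ) (hω : IsPrimitiveRoot ω N) :
    LinearIndependent ℚ (fun ab : Fin (p-1) × Fin (q-1) =>
      (ω^q)^(ab.1 : ℕ) * (ω^p)^(ab.2 : ℕ)) := by
  subst hN
  haveI : NeZero p := ⟨hp.ne_zero⟩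
  haveI : NeZero q := ⟨hq.ne_zero⟩
  have hN0 : p * q ≠ 0 := Nat.mul_ne_zero hp.ne_zero hq.ne_zero
  have hNpos : 0 < p * q := Nat.pos_of_ne_zero hN0
  have hint : IsIntegral ℚ ω := (hω.isIntegral hNpos).tower_top
  set K := Algebra.adjoin ℚ ({ω} : Set ℂ) with hK
  let pb : PowerBasis ℚ K := Algebra.adjoin.powerBasis hint
  haveI : FiniteDimensional ℚ K := pb.finite
  have hrank : Module.finrank ℚ K = (p - 1) * (q - 1) := by
    rw [pb.finrank]
    show (minpoly ℚ ω).natDegree = _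
    rw [← Polynomial.cyclotomic_eq_minpoly_rat hω hNpos, Polynomial.natDegree_cyclotomic,
      Nat.totient_mul ((Nat.coprime_primes hp hq).mpr hpq),
      Nat.totient_prime hp, Nat.totient_prime hq]
  set ωK : K := ⟨ω, Algebra.subset_adjoin (Set.mem_singleton ω)⟩ with hωK
  set ηK : K := ωK ^ q with hηK
  set θK : K := ωK ^ p with hθK
  set vK : Fin (p-1) × Fin (q-1) → K := fun ab => ηK^(ab.1 : ℕ) * θK^(ab.2 : ℕ) with hvK
  set S := Submodule.span ℚ (Set.range vK) with hS
  -- relations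
  have hη : IsPrimitiveRoot (ω ^ q) p := hω.pow hNpos (mul_comm p q)
  have hθ : IsPrimitiveRoot (ω ^ p) q := hω.pow hNpos rfl
  have hgeomη : ∑ i ∈ Finset.range p, ηK ^ i = 0 := by
    apply Subtype.coe_injective
    push_cast
    exact hη.geom_sum_eq_zero hp.one_lt
  have hgeomθ : ∑ i ∈ Finset.range q, θK ^ i = 0 := by
    apply Subtype.coe_injective
    push_cast
    exact hθ.geom_sum_eq_zero hq.one_lt
  have claimA : ∀ a b : ℕ, a < p → b < q - 1 → ηK ^ a * θK ^ b ∈ S := by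
    intro a b ha hb
    rcases lt_or_ge a (p - 1) with h | h
    · exact Submodule.subset_span ⟨(⟨a, h⟩, ⟨b, hb⟩), rfl⟩
    · have ha' : a = p - 1 := by omega
      have hrel : ηK ^ a = -∑ i ∈ Finset.range (p - 1), ηK ^ i := by
        have hsplit : (∑ i ∈ Finset.range (p-1), ηK ^ i) + ηK ^ (p-1) = 0 := by
          rw [← Finset.sum_range_succ]
          rw [show p - 1 + 1 = p by omega]
          exact hgeomη
        rw [ha']
        exact eq_neg_of_add_eq_zero_right hsplit
      rw [hrel, neg_mul, Finset.sum_mul]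
      refine Submodule.neg_mem _ (Submodule.sum_mem _ fun i hi => ?_)
      exact Submodule.subset_span ⟨(⟨i, Finset.mem_range.mp hi⟩, ⟨b, hb⟩), rfl⟩
  have claimB : ∀ a b : ℕ, a < p → b < q → ηK ^ a * θK ^ b ∈ S := by
    intro a b ha hb
    rcases lt_or_ge b (q - 1) with h | h
    · exact claimA a b ha h
    · have hb' : b = q - 1 := by omega
      have hrel : θK ^ b = -∑ j ∈ Finset.range (q - 1), θK ^ j := by
        have hsplit : (∑ j ∈ Finset.range (q-1), θK ^ j) + θK ^ (q-1) = 0 := by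
          rw [← Finset.sum_range_succ]
          rw [show q - 1 + 1 = q by omega]
          exact hgeomθ
        rw [hb']
        exact eq_neg_of_add_eq_zero_right hsplit
      rw [hrel, mul_neg, Finset.mul_sum]
      refine Submodule.neg_mem _ (Submodule.sum_mem _ fun j hj => ?_)
      exact claimA a j ha (Finset.mem_range.mp hj)
  have hpowmod : ∀ (x : K), x ^ (p * q) = 1 → ∀ m : ℕ, x ^ m = x ^ (m % (p * q)) := by
    intro x hx m
    conv_lhs => rw [← Nat.div_add_mod m (p * q)]
    rw [pow_add, pow_mul, hx, one_pow, one_mul]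
  have hωKN : ωK ^ (p * q) = 1 := by
    apply Subtype.coe_injective
    push_cast
    exact hω.pow_eq_one
  have claimC : ∀ m : ℕ, ωK ^ m ∈ S := by
    intro m
    obtain ⟨st, hst⟩ := (phi_bij hp hq hpq).surjective ((m : ZMod (p * q)))
    have hmod : (q * st.1.val + p * st.2.val) % (p * q) = m % (p * q) :=
      (ZMod.natCast_eq_natCast_iff _ _ _).mp hst
    have : ωK ^ m = ηK ^ st.1.val * θK ^ st.2.val := by
      rw [hpowmod ωK hωKN m, ← hmod, ← hpowmod ωK hωKN, pow_add, pow_mul, pow_mul]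
    rw [this]
    exact claimB _ _ (ZMod.val_lt st.1) (ZMod.val_lt st.2)
  have hspan : ⊤ ≤ S := by
    rw [← pb.basis.span_eq]
    apply Submodule.span_le.mpr
    rintro x ⟨i, rfl⟩
    have hbi : pb.basis i = ωK ^ (i : ℕ) := pb.basis_eq_pow i
    rw [hbi]
    exact claimC i
  have hcard : Fintype.card (Fin (p-1) × Fin (q-1)) = Module.finrank ℚ K := by
    simp [hrank]
  have hli : LinearIndependent ℚ vK :=
    linearIndependent_of_top_le_span_of_card_eq_finrank hspan hcard
  have hmap := hli.map' K.val.toLinearMap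
    (LinearMap.ker_eq_bot.mpr Subtype.coe_injective)
  exact hmap

/-- Nonnegative integer solutions of `d(s,t) = f(s)+g(t)`, total `p+q`, must be a
sum of two indicators. -/
lemma indicator_lemma {p q : ℕ} [NeZero p] [NeZero q] (hp : p.Prime) (hq : q.Prime) (hpq : p ≠ q)
    (d : ZMod p × ZMod q → ℤ) (hd0 : ∀ st, 0 ≤ d st)
    (hsum : ∑ st, d st = (p : ℤ) + q)
    (f : ZMod p → ℤ) (g : ZMod q → ℤ) (hfg : ∀ st, d st = f st.1 + g st.2) :
    ∃ s0 t0, ∀ st : ZMod p × ZMod q,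
      d st = (if st.1 = s0 then 1 else 0) + (if st.2 = t0 then 1 else 0) := by
  classical
  -- normalize f by subtracting its minimum
  obtain ⟨smin, -, hsmin⟩ := Finset.exists_min_image Finset.univ f Finset.univ_nonempty
  set f' : ZMod p → ℤ := fun s => f s - f smin with hf'
  set g' : ZMod q → ℤ := fun t => g t + f smin with hg'
  have hfg' : ∀ st : ZMod p × ZMod q, d st = f' st.1 + g' st.2 := by
    intro st; rw [hfg st]; simp only [hf', hg']; ring
  have hf'0 : ∀ s, 0 ≤ f' s := fun s => sub_nonneg.mpr (hsmin s (Finset.mem_univ s))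
  have hg'0 : ∀ t, 0 ≤ g' t := by
    intro t
    have := hd0 (smin, t)
    rw [hfg' (smin, t)] at this
    simpa [hf'] using this
  -- total sum decomposition
  have hcardp : (Finset.univ : Finset (ZMod p)).card = p := by simp [ZMod.card]
  have hcardq : (Finset.univ : Finset (ZMod q)).card = q := by simp [ZMod.card]
  set F := ∑ s, f' s with hF
  set G := ∑ t, g' t with hG
  have htot : (q : ℤ) * F + (p : ℤ) * G = (p : ℤ) + q := by
    have : ∑ st : ZMod p × ZMod q, d st = (q : ℤ) * F + (p : ℤ) * G := by
      rw [Fintype.sum_prod_type]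
      have : ∀ s : ZMod p, ∑ t : ZMod q, d (s, t) = (q : ℤ) * f' s + G := by
        intro s
        have : ∀ t : ZMod q, d (s, t) = f' s + g' t := fun t => hfg' (s, t)
        rw [Finset.sum_congr rfl (fun t _ => this t), Finset.sum_add_distrib]
        simp [hcardq, mul_comm, hG]
      rw [Finset.sum_congr rfl (fun s _ => this s), Finset.sum_add_distrib,
        ← Finset.mul_sum, Finset.sum_const, hcardp]
      ring
    rw [← this, hsum]
  have hF0 : 0 ≤ F := Finset.sum_nonneg fun s _ => hf'0 s
  have hG0 : 0 ≤ G := Finset.sum_nonneg fun t _ => hg'0 t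
  have hp1 : (1 : ℤ) < p := by exact_mod_cast hp.one_lt
  have hq1 : (1 : ℤ) < q := by exact_mod_cast hq.one_lt
  have hFne : F ≠ 0 := by
    intro h0
    rw [h0, mul_zero, zero_add] at htot
    have hdvd : (p : ℤ) ∣ (q : ℤ) := ⟨G - 1, by linarith⟩
    have : p ∣ q := by exact_mod_cast hdvd
    exact hpq ((Nat.prime_dvd_prime_iff_eq hp hq).mp this)
  have hGne : G ≠ 0 := by
    intro h0
    rw [h0, mul_zero, add_zero] at htot
    have hdvd : (q : ℤ) ∣ (p : ℤ) := ⟨F - 1, by linarith⟩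
    have : q ∣ p := by exact_mod_cast hdvd
    exact hpq ((Nat.prime_dvd_prime_iff_eq hq hp).mp this).symm
  have hF1' : 1 ≤ F := by omega
  have hG1' : 1 ≤ G := by omega
  have hF1 : F = 1 := by
    by_contra hne
    have h2 : 2 ≤ F := by omega
    have ha : (q : ℤ) * 2 ≤ q * F := by nlinarith
    have hb : (p : ℤ) * 1 ≤ p * G := by nlinarith
    linarith
  have hG1 : G = 1 := by
    by_contra hne
    have h2 : 2 ≤ G := by omega
    have ha : (p : ℤ) * 2 ≤ p * G := by nlinarith
    have hb : (q : ℤ) * 1 ≤ q * F := by nlinarith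
    linarith
  -- a nonneg function summing to 1 is an indicator
  have key : ∀ {n : ℕ} [NeZero n] (h : ZMod n → ℤ), (∀ x, 0 ≤ h x) → (∑ x, h x = 1) →
      ∃ x0, ∀ x, h x = if x = x0 then 1 else 0 := by
    intro n _ h h0 h1
    have : ∃ x0, h x0 ≠ 0 := by
      by_contra hc
      push_neg at hc
      rw [Finset.sum_congr rfl (fun x _ => hc x)] at h1
      simp at h1
    obtain ⟨x0, hx0⟩ := this
    have hx0' : 1 ≤ h x0 := by have := h0 x0; omega
    have hrest : ∑ x ∈ Finset.univ.erase x0, h x = 1 - h x0 := by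
      have := Finset.add_sum_erase Finset.univ h (Finset.mem_univ x0)
      omega
    have hrest0 : ∀ x ∈ Finset.univ.erase x0, h x = 0 := by
      have hle : ∑ x ∈ Finset.univ.erase x0, h x ≤ 0 := by omega
      have hge : 0 ≤ ∑ x ∈ Finset.univ.erase x0, h x :=
        Finset.sum_nonneg fun x _ => h0 x
      intro x hx
      have := (Finset.sum_eq_zero_iff_of_nonneg fun x _ => h0 x).mp (le_antisymm hle hge)
      exact this x hx
    have hx01 : h x0 = 1 := by
      have := hrest
      rw [Finset.sum_congr rfl hrest0] at this
      simp at this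
      omega
    refine ⟨x0, fun x => ?_⟩
    by_cases hx : x = x0
    · simp [hx, hx01]
    · simp [hx]
      exact hrest0 x (Finset.mem_erase.mpr ⟨hx, Finset.mem_univ x⟩)
  obtain ⟨s0, hs0⟩ := key f' hf'0 hF1
  obtain ⟨t0, ht0⟩ := key g' hg'0 hG1
  exact ⟨s0, t0, fun st => by rw [hfg' st, hs0 st.1, ht0 st.2]⟩

/-- The key structure result: a length-`p+q` vanishing sum of `pq`-th roots of unity
with multiplicities `c` is a `p`-cycle plus a `q`-cycle. -/
lemma count_structure {p q : ℕ} [NeZero (p*q)] [NeZero p] [NeZero q] (hp : p.Prime) (hq : q.Prime) (hpq : p ≠ q)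
    (c : ZMod (p * q) → ℕ) (hsum : ∑ x, c x = p + q)
    (hvanish : ∑ x : ZMod (p * q),
      (c x : ℂ) * Complex.exp (2 * Real.pi * Complex.I / (p * q)) ^ x.val = 0) :
    ∃ (r : ZMod (p * q)) (A B : Finset (ZMod (p * q))),
      ↑A = Set.range (fun t : ZMod (p * q) => r + (q : ZMod (p * q)) * t) ∧
      ↑B = Set.range (fun t : ZMod (p * q) => r + (p : ZMod (p * q)) * t) ∧
      A.card = p ∧ B.card = q ∧ A ∩ B = {r} ∧
      ∀ x, c x = (if x ∈ A then 1 else 0) + (if x ∈ B then 1 else 0) := by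
  classical
  have hN0 : p * q ≠ 0 := Nat.mul_ne_zero hp.ne_zero hq.ne_zero
  have hNpos : 0 < p * q := Nat.pos_of_ne_zero hN0
  set ω : ℂ := Complex.exp (2 * Real.pi * Complex.I / ((p * q : ℕ) : ℂ)) with hωdef
  have hω : IsPrimitiveRoot ω (p * q) := Complex.isPrimitiveRoot_exp _ hN0
  have hωpow : ∀ m : ℕ, ω ^ m = ω ^ (m % (p * q)) := by
    intro m
    conv_lhs => rw [← Nat.div_add_mod m (p * q)]
    rw [pow_add, pow_mul, hω.pow_eq_one, one_pow, one_mul]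
  have hvan : ∑ x : ZMod (p * q), (c x : ℂ) * ω ^ x.val = 0 := by
    rw [← hvanish]
    apply Finset.sum_congr rfl
    intro x _
    rw [hωdef, Nat.cast_mul]
  have hφbij := phi_bij hp hq hpq
  have hφinj := phi_inj hp hq hpq
  -- counts in CRT coordinates
  set d : ZMod p × ZMod q → ℤ := fun st => (c (phi p q st) : ℤ) with hd
  have hd0 : ∀ st, 0 ≤ d st := fun st => Int.natCast_nonneg _
  have hdsum : ∑ st, d st = (p : ℤ) + q := by
    have h1 : ∑ st : ZMod p × ZMod q, (c (phi p q st) : ℤ) = ∑ x : ZMod (p * q), (c x : ℤ) :=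
      hφbij.sum_comp fun x => (c x : ℤ)
    rw [hd, h1, ← Nat.cast_sum, hsum]
    push_cast; ring
  -- the vanishing sum in CRT coordinates
  have hχφ : ∀ st : ZMod p × ZMod q,
      ω ^ (phi p q st).val = (ω ^ q) ^ st.1.val * (ω ^ p) ^ st.2.val := by
    intro st
    have : (phi p q st).val = (q * st.1.val + p * st.2.val) % (p * q) := ZMod.val_natCast _ _
    rw [this, ← hωpow, pow_add, pow_mul, pow_mul]
  have hvan2 : ∑ st : ZMod p × ZMod q,
      (d st : ℂ) * ((ω ^ q) ^ st.1.val * (ω ^ p) ^ st.2.val) = 0 := by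
    rw [← hvan]
    rw [← hφbij.sum_comp fun x => (c x : ℂ) * ω ^ x.val]
    apply Finset.sum_congr rfl
    intro st _
    rw [hχφ st]
    push_cast [hd]
    ring
  -- geometric sums vanish
  have hgeo_p : ∑ s : ZMod p, (ω ^ q) ^ s.val = 0 := by
    haveI : NeZero p := ⟨hp.ne_zero⟩
    rw [sum_val fun i => (ω ^ q) ^ i]
    exact (hω.pow hNpos (mul_comm p q)).geom_sum_eq_zero hp.one_lt
  have hgeo_q : ∑ t : ZMod q, (ω ^ p) ^ t.val = 0 := by
    haveI : NeZero q := ⟨hq.ne_zero⟩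
    rw [sum_val fun i => (ω ^ p) ^ i]
    exact (hω.pow hNpos rfl).geom_sum_eq_zero hq.one_lt
  -- double differences
  set s1 : ZMod p := ((p - 1 : ℕ) : ZMod p) with hs1
  set t1 : ZMod q := ((q - 1 : ℕ) : ZMod q) with ht1
  have hs1val : s1.val = p - 1 := ZMod.val_cast_of_lt (by have := hp.pos; omega)
  have ht1val : t1.val = q - 1 := ZMod.val_cast_of_lt (by have := hq.pos; omega)
  set e : ZMod p × ZMod q → ℤ :=
    fun st => d st - d (st.1, t1) - d (s1, st.2) + d (s1, t1) with he
  have he_row : ∀ t, e (s1, t) = 0 := by intro t; simp [he]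
  have he_col : ∀ s, e (s, t1) = 0 := by intro s; simp [he]
  have hvan_e : ∑ st : ZMod p × ZMod q,
      (e st : ℂ) * ((ω ^ q) ^ st.1.val * (ω ^ p) ^ st.2.val) = 0 := by
    have expand : ∀ st : ZMod p × ZMod q,
        (e st : ℂ) * ((ω ^ q) ^ st.1.val * (ω ^ p) ^ st.2.val)
        = (d st : ℂ) * ((ω ^ q) ^ st.1.val * (ω ^ p) ^ st.2.val)
          - ((d (st.1, t1) : ℂ) * (ω ^ q) ^ st.1.val) * (ω ^ p) ^ st.2.val
          - ((d (s1, st.2) : ℂ) * (ω ^ p) ^ st.2.val) * (ω ^ q) ^ st.1.val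
          + (d (s1, t1) : ℂ) * ((ω ^ q) ^ st.1.val * (ω ^ p) ^ st.2.val) := by
      intro st; push_cast [he]; ring
    rw [Finset.sum_congr rfl fun st _ => expand st]
    rw [Finset.sum_add_distrib, Finset.sum_sub_distrib, Finset.sum_sub_distrib]
    have t2 : ∑ st : ZMod p × ZMod q,
        ((d (st.1, t1) : ℂ) * (ω ^ q) ^ st.1.val) * (ω ^ p) ^ st.2.val = 0 := by
      rw [Fintype.sum_prod_type]
      have : ∀ s : ZMod p, ∑ t : ZMod q,
          ((d (s, t1) : ℂ) * (ω ^ q) ^ s.val) * (ω ^ p) ^ t.val = 0 := by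
        intro s
        rw [← Finset.mul_sum, hgeo_q, mul_zero]
      simp [this]
    have t3 : ∑ st : ZMod p × ZMod q,
        ((d (s1, st.2) : ℂ) * (ω ^ p) ^ st.2.val) * (ω ^ q) ^ st.1.val = 0 := by
      rw [Fintype.sum_prod_type_right]
      have : ∀ t : ZMod q, ∑ s : ZMod p,
          ((d (s1, t) : ℂ) * (ω ^ p) ^ t.val) * (ω ^ q) ^ s.val = 0 := by
        intro t
        rw [← Finset.mul_sum, hgeo_p, mul_zero]
      simp [this]
    have t4 : ∑ st : ZMod p × ZMod q,
        (d (s1, t1) : ℂ) * ((ω ^ q) ^ st.1.val * (ω ^ p) ^ st.2.val) = 0 := by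
      rw [← Finset.mul_sum, Fintype.sum_prod_type]
      have : ∀ s : ZMod p, ∑ t : ZMod q, (ω ^ q) ^ s.val * (ω ^ p) ^ t.val = 0 := by
        intro s
        rw [← Finset.mul_sum, hgeo_q, mul_zero]
      simp [this]
    rw [hvan2, t2, t3, t4]
    ring
  -- linear independence kills the double differences
  have hindep := indep hp hq hpq rfl ω hω
  have he_zero : ∀ st, e st = 0 := by
    haveI : NeZero p := ⟨hp.ne_zero⟩
    haveI : NeZero q := ⟨hq.ne_zero⟩
    have hp1 : 0 < p - 1 := by have := hp.one_lt; omega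
    have hq1 : 0 < q - 1 := by have := hq.one_lt; omega
    set g : Fin (p-1) × Fin (q-1) → ℚ :=
      fun ab => (e (((ab.1 : ℕ) : ZMod p), ((ab.2 : ℕ) : ZMod q)) : ℚ) with hg
    have hsum_g : ∑ ab, g ab • ((ω^q)^(ab.1 : ℕ) * (ω^p)^(ab.2 : ℕ)) = 0 := by
      have hfilter : ∑ st : ZMod p × ZMod q,
          (e st : ℂ) * ((ω ^ q) ^ st.1.val * (ω ^ p) ^ st.2.val)
          = ∑ st ∈ Finset.univ.filter (fun st : ZMod p × ZMod q => st.1 ≠ s1 ∧ st.2 ≠ t1),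
            (e st : ℂ) * ((ω ^ q) ^ st.1.val * (ω ^ p) ^ st.2.val) := by
        symm
        apply Finset.sum_filter_of_ne
        intro st _ hne
        constructor
        · intro h1
          apply hne
          have hz : e st = 0 := by
            rw [show st = (s1, st.2) from Prod.ext h1 rfl]
            exact he_row st.2
          rw [hz]
          simp
        · intro h2
          apply hne
          have hz : e st = 0 := by
            rw [show st = (st.1, t1) from Prod.ext rfl h2]
            exact he_col st.1
          rw [hz]
          simp
      rw [← hvan_e, hfilter] at *
      symm
      apply Finset.sum_nbij'
        (i := fun st : ZMod p × ZMod q =>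
          ((⟨st.1.val % (p-1), Nat.mod_lt _ hp1⟩ : Fin (p-1)),
           (⟨st.2.val % (q-1), Nat.mod_lt _ hq1⟩ : Fin (q-1))))
        (j := fun ab : Fin (p-1) × Fin (q-1) =>
          (((ab.1 : ℕ) : ZMod p), ((ab.2 : ℕ) : ZMod q)))
      · intro st _; exact Finset.mem_univ _
      · intro ab _
        refine Finset.mem_filter.mpr ⟨Finset.mem_univ _, ?_, ?_⟩
        · intro hcontra
          have := congrArg ZMod.val hcontra
          rw [ZMod.val_cast_of_lt (lt_trans (ab.1.isLt) (by omega)), hs1val] at this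
          omega
        · intro hcontra
          have := congrArg ZMod.val hcontra
          rw [ZMod.val_cast_of_lt (lt_trans (ab.2.isLt) (by omega)), ht1val] at this
          omega
      · intro st hst
        obtain ⟨-, h1, h2⟩ := Finset.mem_filter.mp hst
        have hv1 : st.1.val < p - 1 := by
          have := ZMod.val_lt st.1
          rcases Nat.lt_or_ge st.1.val (p-1) with h | h
          · exact h
          · exfalso; apply h1; apply ZMod.val_injective; omega
        have hv2 : st.2.val < q - 1 := by
          have := ZMod.val_lt st.2
          rcases Nat.lt_or_ge st.2.val (q-1) with h | h
          · exact h
          · exfalso; apply h2; apply ZMod.val_injective; omega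
        simp only [Nat.mod_eq_of_lt hv1, Nat.mod_eq_of_lt hv2]
        simp [ZMod.natCast_val, ZMod.cast_id]
      · intro ab _
        have e1 : (((ab.1 : ℕ) : ZMod p)).val = (ab.1 : ℕ) :=
          ZMod.val_cast_of_lt (lt_trans (ab.1.isLt) (by omega))
        have e2 : (((ab.2 : ℕ) : ZMod q)).val = (ab.2 : ℕ) :=
          ZMod.val_cast_of_lt (lt_trans (ab.2.isLt) (by omega))
        ext <;> simp [e1, e2, Nat.mod_eq_of_lt (ab.1.isLt), Nat.mod_eq_of_lt (ab.2.isLt)]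
      · intro st hst
        obtain ⟨-, h1, h2⟩ := Finset.mem_filter.mp hst
        have hv1 : st.1.val < p - 1 := by
          have := ZMod.val_lt st.1
          rcases Nat.lt_or_ge st.1.val (p-1) with h | h
          · exact h
          · exfalso; apply h1; apply ZMod.val_injective; omega
        have hv2 : st.2.val < q - 1 := by
          have := ZMod.val_lt st.2
          rcases Nat.lt_or_ge st.2.val (q-1) with h | h
          · exact h
          · exfalso; apply h2; apply ZMod.val_injective; omega
        simp only [hg, Nat.mod_eq_of_lt hv1, Nat.mod_eq_of_lt hv2]
        simp [ZMod.natCast_val, ZMod.cast_id, Rat.smul_def]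
    have := (Fintype.linearIndependent_iff.mp hindep) g hsum_g
    -- transfer to all st
    intro st
    rcases eq_or_ne st.1 s1 with h1 | h1
    · rw [show st = (s1, st.2) by rw [← h1]]
      exact he_row st.2
    rcases eq_or_ne st.2 t1 with h2 | h2
    · rw [show st = (st.1, t1) by rw [← h2]]
      exact he_col st.1
    have hv1 : st.1.val < p - 1 := by
      have := ZMod.val_lt st.1
      rcases Nat.lt_or_ge st.1.val (p-1) with h | h
      · exact h
      · exfalso; apply h1; apply ZMod.val_injective; omega
    have hv2 : st.2.val < q - 1 := by
      have := ZMod.val_lt st.2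
      rcases Nat.lt_or_ge st.2.val (q-1) with h | h
      · exact h
      · exfalso; apply h2; apply ZMod.val_injective; omega
    have := this (⟨st.1.val, hv1⟩, ⟨st.2.val, hv2⟩)
    simp only [hg] at this
    rw [show (((st.1.val : ℕ) : ZMod p)) = st.1 by simp [ZMod.natCast_val, ZMod.cast_id],
      show (((st.2.val : ℕ) : ZMod q)) = st.2 by simp [ZMod.natCast_val, ZMod.cast_id]] at this
    exact_mod_cast this
  -- d is a sum of a function of s and a function of t
  haveI : NeZero p := ⟨hp.ne_zero⟩
  haveI : NeZero q := ⟨hq.ne_zero⟩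
  obtain ⟨s0, t0, hind⟩ := indicator_lemma hp hq hpq d hd0 hdsum
    (fun s => d (s, t1) - d (s1, t1)) (fun t => d (s1, t))
    (by
      intro st
      have h := he_zero st
      simp only [he] at h
      show d st = d (st.1, t1) - d (s1, t1) + d (s1, st.2)
      omega)
  -- build the finsets
  set r : ZMod (p * q) := phi p q (s0, t0) with hr
  set A : Finset (ZMod (p * q)) :=
    Finset.image (fun s : ZMod p => phi p q (s, t0)) Finset.univ with hA
  set B : Finset (ZMod (p * q)) :=
    Finset.image (fun t : ZMod q => phi p q (s0, t)) Finset.univ with hB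
  have hAinj : Function.Injective (fun s : ZMod p => phi p q (s, t0)) := by
    intro s s' h
    have := hφinj h
    exact (Prod.ext_iff.mp this).1
  have hBinj : Function.Injective (fun t : ZMod q => phi p q (s0, t)) := by
    intro t t' h
    have := hφinj h
    exact (Prod.ext_iff.mp this).2
  have hmemA : ∀ st : ZMod p × ZMod q, phi p q st ∈ A ↔ st.2 = t0 := by
    intro st
    constructor
    · intro hx
      obtain ⟨s, -, hs⟩ := Finset.mem_image.mp hx
      exact ((Prod.ext_iff.mp (hφinj hs)).2).symm
    · intro ht
      exact Finset.mem_image.mpr ⟨st.1, Finset.mem_univ _, by rw [← ht]⟩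
  have hmemB : ∀ st : ZMod p × ZMod q, phi p q st ∈ B ↔ st.1 = s0 := by
    intro st
    constructor
    · intro hx
      obtain ⟨t, -, hs⟩ := Finset.mem_image.mp hx
      exact ((Prod.ext_iff.mp (hφinj hs)).1).symm
    · intro hs
      exact Finset.mem_image.mpr ⟨st.2, Finset.mem_univ _, by rw [← hs]⟩
  refine ⟨r, A, B, ?_, ?_, ?_, ?_, ?_, ?_⟩
  · -- ↑A = range (r + q * ·)
    ext x
    simp only [hA, Finset.coe_image, Finset.coe_univ, Set.image_univ, Set.mem_range,
      Set.mem_diff, Set.mem_singleton_iff]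
    constructor
    · rintro ⟨s, rfl⟩
      refine ⟨((s.val : ℕ) : ZMod (p*q)) - ((s0.val : ℕ) : ZMod (p*q)), ?_⟩
      symm
      show phi p q (s, t0) = phi p q (s0, t0) + _
      unfold phi
      push_cast
      ring
    · rintro ⟨u, rfl⟩
      refine ⟨s0 + ((u.val : ℕ) : ZMod p), ?_⟩
      show phi p q _ = phi p q (s0, t0) + (q : ZMod (p*q)) * u
      unfold phi
      rw [Nat.cast_add, Nat.cast_add]
      have hval : (s0 + ((u.val : ℕ) : ZMod p)).val ≡ s0.val + u.val [MOD p] := by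
        rw [ZMod.val_add]
        have : (((u.val : ℕ) : ZMod p)).val = u.val % p := ZMod.val_natCast _ _
        rw [this]
        calc (s0.val + u.val % p) % p ≡ s0.val + u.val % p [MOD p] :=
              (Nat.mod_modEq _ p)
          _ ≡ s0.val + u.val [MOD p] := Nat.ModEq.add_left _ (Nat.mod_modEq _ p)
      rw [mul_cast_congr _ _ hval]
      push_cast
      rw [show ((u.val : ℕ) : ZMod (p*q)) = u by simp [ZMod.natCast_val, ZMod.cast_id]]
      ring
  · -- ↑B = range (r + p * ·)
    ext x
    simp only [hB, Finset.coe_image, Finset.coe_univ, Set.image_univ, Set.mem_range,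
      Set.mem_diff, Set.mem_singleton_iff]
    constructor
    · rintro ⟨t, rfl⟩
      refine ⟨((t.val : ℕ) : ZMod (p*q)) - ((t0.val : ℕ) : ZMod (p*q)), ?_⟩
      symm
      show phi p q (s0, t) = phi p q (s0, t0) + _
      unfold phi
      push_cast
      ring
    · rintro ⟨u, rfl⟩
      refine ⟨t0 + ((u.val : ℕ) : ZMod q), ?_⟩
      show phi p q _ = phi p q (s0, t0) + (p : ZMod (p*q)) * u
      unfold phi
      rw [Nat.cast_add, Nat.cast_add]
      have hval : (t0 + ((u.val : ℕ) : ZMod q)).val ≡ t0.val + u.val [MOD q] := by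
        rw [ZMod.val_add]
        have : (((u.val : ℕ) : ZMod q)).val = u.val % q := ZMod.val_natCast _ _
        rw [this]
        calc (t0.val + u.val % q) % q ≡ t0.val + u.val % q [MOD q] :=
              (Nat.mod_modEq _ q)
          _ ≡ t0.val + u.val [MOD q] := Nat.ModEq.add_left _ (Nat.mod_modEq _ q)
      rw [mul_cast_congr' _ _ hval]
      push_cast
      rw [show ((u.val : ℕ) : ZMod (p*q)) = u by simp [ZMod.natCast_val, ZMod.cast_id]]
      ring
  · -- A.card = p
    rw [hA, Finset.card_image_of_injective _ hAinj]
    simp [ZMod.card]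
  · -- B.card = q
    rw [hB, Finset.card_image_of_injective _ hBinj]
    simp [ZMod.card]
  · -- A ∩ B = {r}
    ext x
    simp only [Finset.mem_inter, Finset.mem_singleton]
    constructor
    · rintro ⟨hxA, hxB⟩
      obtain ⟨st, rfl⟩ := hφbij.surjective x
      rw [hmemA st] at hxA
      rw [hmemB st] at hxB
      exact congrArg (phi p q) (Prod.ext hxB hxA)
    · rintro rfl
      exact ⟨(hmemA (s0, t0)).mpr rfl, (hmemB (s0, t0)).mpr rfl⟩
  · -- the count formula
    intro x
    obtain ⟨st, rfl⟩ := hφbij.surjective x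
    have hcount := hind st
    rw [hd] at hcount
    simp only [hmemA st, hmemB st]
    rcases eq_or_ne st.1 s0 with h1 | h1 <;> rcases eq_or_ne st.2 t0 with h2 | h2 <;>
      simp only [h1, h2, if_pos, if_neg, if_true, if_false] at hcount ⊢ <;> omega

end RowsAux

/-- For a Butson matrix `U = (ω^{M_{ij}})` of order `p+q` over `pq`-th roots of unity,
every pair of distinct rows admits an admissible decomposition. -/
theorem rows_admissible_decomp
    (p q : ℕ) (hp : p.Prime) (hq : q.Prime) (hpq : p ≠ q) [NeZero (p + q)]
    (M : Matrix (ZMod (p + q)) (ZMod (p + q)) (ZMod (p * q)))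
    (U : Matrix (ZMod (p + q)) (ZMod (p + q)) ℂ)
    (hU : ∀ i j, U i j = Complex.exp (2 * Real.pi * Complex.I / (p * q)) ^ (M i j).val)
    (hHad : _root_.IsHadamard U) :
    ∀ i j : ZMod (p + q), i ≠ j →
      ∃ (r : ZMod (p * q)) (P Q R : Finset (ZMod (p + q))),
        AdmissibleDecomp p q (fun k => M j k - M i k) P Q R r := by
  classical
  intro i j hij
  haveI : NeZero (p * q) := ⟨Nat.mul_ne_zero hp.ne_zero hq.ne_zero⟩
  have hN0 : p * q ≠ 0 := Nat.mul_ne_zero hp.ne_zero hq.ne_zero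
  set L : ZMod (p + q) → ZMod (p * q) := fun k => M j k - M i k with hL
  set ζ : ℂ := Complex.exp (2 * Real.pi * Complex.I / (p * q)) with hζdef
  have hζ : IsPrimitiveRoot ζ (p * q) := by
    have := Complex.isPrimitiveRoot_exp (p * q) hN0
    rwa [show (((p * q : ℕ)) : ℂ) = (p : ℂ) * q by push_cast; ring] at this
  have hζpow : ∀ m : ℕ, ζ ^ m = ζ ^ (m % (p * q)) := by
    intro m
    conv_lhs => rw [← Nat.div_add_mod m (p * q)]
    rw [pow_add, pow_mul, hζ.pow_eq_one, one_pow, one_mul]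
  have hζne : ζ ≠ 0 := Complex.exp_ne_zero _
  -- orthogonality of rows j and i
  have horth : ∑ k : ZMod (p + q), U j k * (starRingEnd ℂ) (U i k) = 0 := by
    have hentry := congrFun (congrFun (congrArg (fun m => m) hHad.2) j) i
    have h1 : (U * Uᴴ) j i = ∑ k, U j k * (starRingEnd ℂ) (U i k) := by
      rw [Matrix.mul_apply]
      apply Finset.sum_congr rfl
      intro k _
      rw [Matrix.conjTranspose_apply]
      rfl
    have h2 : (((p + q : ℕ) : ℂ) • (1 : Matrix (ZMod (p+q)) (ZMod (p+q)) ℂ)) j i = 0 := by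
      rw [Matrix.smul_apply, Matrix.one_apply_ne (Ne.symm hij), smul_zero]
    rw [← h1, hHad.2, h2]
  -- each term is a root of unity with exponent L k
  have hterm : ∀ k, U j k * (starRingEnd ℂ) (U i k) = ζ ^ (L k).val := by
    intro k
    have hstar : (starRingEnd ℂ) (U i k) = (U i k)⁻¹ := (Complex.inv_eq_conj (hHad.1 i k)).symm
    rw [hstar, hU j k, hU i k]
    have key : ζ ^ (L k).val * ζ ^ (M i k).val = ζ ^ (M j k).val := by
      rw [← pow_add, hζpow ((L k).val + (M i k).val), ← ZMod.val_add]
      have : L k + M i k = M j k := by rw [hL]; ring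
      rw [this]
    rw [← div_eq_mul_inv, div_eq_iff (pow_ne_zero _ hζne)]
    exact key.symm
  -- fiber counts
  set c : ZMod (p * q) → ℕ :=
    fun x => (Finset.univ.filter (fun k => L k = x)).card with hc
  have hcsum : ∑ x, c x = p + q := by
    have := Finset.card_eq_sum_card_fiberwise
      (f := L) (s := Finset.univ) (t := Finset.univ) (fun k _ => Finset.mem_univ _)
    rw [hc, ← this]
    simp [ZMod.card]
  have hcvan : ∑ x : ZMod (p * q),
      (c x : ℂ) * Complex.exp (2 * Real.pi * Complex.I / (p * q)) ^ x.val = 0 := by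
    have hfib := Finset.sum_fiberwise_of_maps_to
      (g := L) (s := Finset.univ) (t := Finset.univ)
      (fun k _ => Finset.mem_univ _) (fun k => ζ ^ (L k).val)
    have hinner : ∀ x : ZMod (p * q),
        ∑ k ∈ Finset.univ.filter (fun k => L k = x), ζ ^ (L k).val
          = (c x : ℂ) * ζ ^ x.val := by
      intro x
      rw [Finset.sum_congr rfl (fun k hk => by
        rw [(Finset.mem_filter.mp hk).2])]
      rw [Finset.sum_const, hc]
      simp [mul_comm]
    rw [← hζdef]
    rw [← Finset.sum_congr rfl (fun x _ => hinner x), hfib,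
      Finset.sum_congr rfl (fun k _ => (hterm k).symm), horth]
  -- apply the structure theorem
  haveI : NeZero p := ⟨hp.ne_zero⟩
  haveI : NeZero q := ⟨hq.ne_zero⟩
  obtain ⟨r, A, B, hA, hB, hcardA, hcardB, hAB, hform⟩ :=
    RowsAux.count_structure hp hq hpq c hcsum hcvan
  have hrA : r ∈ A := by
    rw [← Finset.mem_coe, hA]
    exact ⟨0, by ring⟩
  have hrB : r ∈ B := by
    rw [← Finset.mem_coe, hB]
    exact ⟨0, by ring⟩
  have hcr : c r = 2 := by rw [hform r, if_pos hrA, if_pos hrB]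
  have hcA : ∀ x ∈ A, x ≠ r → c x = 1 := by
    intro x hx hxr
    have hxB : x ∉ B := by
      intro hxB
      apply hxr
      have : x ∈ A ∩ B := Finset.mem_inter.mpr ⟨hx, hxB⟩
      rwa [hAB, Finset.mem_singleton] at this
    rw [hform x, if_pos hx, if_neg hxB]
  have hcB : ∀ x ∈ B, x ≠ r → c x = 1 := by
    intro x hx hxr
    have hxA : x ∉ A := by
      intro hxA
      apply hxr
      have : x ∈ A ∩ B := Finset.mem_inter.mpr ⟨hxA, hx⟩
      rwa [hAB, Finset.mem_singleton] at this
    rw [hform x, if_pos hx, if_neg hxA]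
  -- build the partition
  set R : Finset (ZMod (p + q)) := Finset.univ.filter (fun k => L k = r) with hR
  set P : Finset (ZMod (p + q)) :=
    Finset.univ.filter (fun k => L k ∈ A ∧ L k ≠ r) with hP
  set Q : Finset (ZMod (p + q)) :=
    Finset.univ.filter (fun k => L k ∈ B ∧ L k ≠ r) with hQ
  refine ⟨r, P, Q, R, ?_, ?_, ?_, ?_, ?_, ?_, ?_, ?_, ?_, ?_⟩
  · -- Disjoint P Q
    rw [Finset.disjoint_left]
    intro k hkP hkQ
    obtain ⟨-, h1, h2⟩ := Finset.mem_filter.mp hkP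
    obtain ⟨-, h3, -⟩ := Finset.mem_filter.mp hkQ
    apply h2
    have : L k ∈ A ∩ B := Finset.mem_inter.mpr ⟨h1, h3⟩
    rwa [hAB, Finset.mem_singleton] at this
  · -- Disjoint P R
    rw [Finset.disjoint_left]
    intro k hkP hkR
    exact (Finset.mem_filter.mp hkP).2.2 (Finset.mem_filter.mp hkR).2
  · -- Disjoint Q R
    rw [Finset.disjoint_left]
    intro k hkQ hkR
    exact (Finset.mem_filter.mp hkQ).2.2 (Finset.mem_filter.mp hkR).2
  · -- union is everything
    apply Finset.eq_univ_of_forall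
    intro k
    rcases eq_or_ne (L k) r with hkr | hkr
    · exact Finset.mem_union.mpr (Or.inr (Finset.mem_filter.mpr ⟨Finset.mem_univ _, hkr⟩))
    · have hck : c (L k) ≠ 0 := by
        rw [hc]
        simp only [ne_eq, Finset.card_eq_zero, Finset.filter_eq_empty_iff]
        push_neg
        exact ⟨k, Finset.mem_univ _, rfl⟩
      have := hform (L k)
      have hmem : L k ∈ A ∨ L k ∈ B := by
        by_contra hcon
        push_neg at hcon
        rw [if_neg hcon.1, if_neg hcon.2] at this
        exact hck this
      rcases hmem with h | h
      · exact Finset.mem_union.mpr (Or.inl (Finset.mem_union.mpr (Or.inl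
          (Finset.mem_filter.mpr ⟨Finset.mem_univ _, h, hkr⟩))))
      · exact Finset.mem_union.mpr (Or.inl (Finset.mem_union.mpr (Or.inr
          (Finset.mem_filter.mpr ⟨Finset.mem_univ _, h, hkr⟩))))
  · -- R.card = 2
    rw [hR, ← hcr, hc]
  · -- L = r on R
    intro k hk
    exact (Finset.mem_filter.mp hk).2
  · -- P.card = p - 1
    have hmaps : ∀ k ∈ P, L k ∈ A.erase r := by
      intro k hk
      obtain ⟨-, h1, h2⟩ := Finset.mem_filter.mp hk
      exact Finset.mem_erase.mpr ⟨h2, h1⟩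
    rw [Finset.card_eq_sum_card_fiberwise hmaps]
    have hone : ∀ x ∈ A.erase r, (P.filter (fun k => L k = x)).card = 1 := by
      intro x hx
      obtain ⟨hxr, hxA⟩ := Finset.mem_erase.mp hx
      have : P.filter (fun k => L k = x) = Finset.univ.filter (fun k => L k = x) := by
        ext k
        simp only [Finset.mem_filter, hP, Finset.mem_univ, true_and]
        constructor
        · rintro ⟨-, h⟩; exact h
        · rintro h; exact ⟨⟨h ▸ hxA, h ▸ hxr⟩, h⟩
      rw [this]
      exact hcA x hxA hxr
    rw [Finset.sum_congr rfl hone, Finset.sum_const, smul_eq_mul, mul_one,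
      Finset.card_erase_of_mem hrA, hcardA]
  · -- BijOn onto the q-coset minus r
    rw [← hA]
    have hPA : ∀ k ∈ P, L k ∈ (↑A \ {r} : Set (ZMod (p * q))) := by
      intro k hk
      obtain ⟨-, h1, h2⟩ := Finset.mem_filter.mp hk
      exact ⟨h1, h2⟩
    refine ⟨fun k hk => hPA k hk, ?_, ?_⟩
    · intro k hk k' hk' hLL
      have hk1 := Finset.mem_coe.mp hk
      have hk1' := Finset.mem_coe.mp hk'
      obtain ⟨-, h1, h2⟩ := Finset.mem_filter.mp hk1
      have hcx : c (L k) = 1 := hcA _ h1 h2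
      apply Finset.card_le_one.mp (le_of_eq hcx)
      · exact Finset.mem_filter.mpr ⟨Finset.mem_univ _, rfl⟩
      · exact Finset.mem_filter.mpr ⟨Finset.mem_univ _, hLL.symm⟩
    · intro x hx
      obtain ⟨hxA, hxr⟩ := hx
      rw [Set.mem_singleton_iff] at hxr
      have hcx : c x = 1 := hcA x (Finset.mem_coe.mp hxA) hxr
      have : (Finset.univ.filter (fun k => L k = x)).Nonempty := by
        rw [← Finset.card_pos]
        show 0 < c x
        rw [hcx]
        norm_num
      obtain ⟨k, hk⟩ := this
      have hLk : L k = x := (Finset.mem_filter.mp hk).2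
      refine ⟨k, ?_, hLk⟩
      apply Finset.mem_coe.mpr
      exact Finset.mem_filter.mpr ⟨Finset.mem_univ _, hLk ▸ Finset.mem_coe.mp hxA, hLk ▸ hxr⟩
  · -- Q.card = q - 1
    have hmaps : ∀ k ∈ Q, L k ∈ B.erase r := by
      intro k hk
      obtain ⟨-, h1, h2⟩ := Finset.mem_filter.mp hk
      exact Finset.mem_erase.mpr ⟨h2, h1⟩
    rw [Finset.card_eq_sum_card_fiberwise hmaps]
    have hone : ∀ x ∈ B.erase r, (Q.filter (fun k => L k = x)).card = 1 := by
      intro x hx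
      obtain ⟨hxr, hxB⟩ := Finset.mem_erase.mp hx
      have : Q.filter (fun k => L k = x) = Finset.univ.filter (fun k => L k = x) := by
        ext k
        simp only [Finset.mem_filter, hQ, Finset.mem_univ, true_and]
        constructor
        · rintro ⟨-, h⟩; exact h
        · rintro h; exact ⟨⟨h ▸ hxB, h ▸ hxr⟩, h⟩
      rw [this]
      exact hcB x hxB hxr
    rw [Finset.sum_congr rfl hone, Finset.sum_const, smul_eq_mul, mul_one,
      Finset.card_erase_of_mem hrB, hcardB]
  · -- BijOn onto the p-coset minus r
    rw [← hB]
    have hQB : ∀ k ∈ Q, L k ∈ (↑B \ {r} : Set (ZMod (p * q))) := by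
      intro k hk
      obtain ⟨-, h1, h2⟩ := Finset.mem_filter.mp hk
      exact ⟨h1, h2⟩
    refine ⟨fun k hk => hQB k hk, ?_, ?_⟩
    · intro k hk k' hk' hLL
      have hk1 := Finset.mem_coe.mp hk
      obtain ⟨-, h1, h2⟩ := Finset.mem_filter.mp hk1
      have hcx : c (L k) = 1 := hcB _ h1 h2
      apply Finset.card_le_one.mp (le_of_eq hcx)
      · exact Finset.mem_filter.mpr ⟨Finset.mem_univ _, rfl⟩
      · exact Finset.mem_filter.mpr ⟨Finset.mem_univ _, hLL.symm⟩
    · intro x hx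
      obtain ⟨hxB, hxr⟩ := hx
      rw [Set.mem_singleton_iff] at hxr
      have hcx : c x = 1 := hcB x (Finset.mem_coe.mp hxB) hxr
      have : (Finset.univ.filter (fun k => L k = x)).Nonempty := by
        rw [← Finset.card_pos]
        show 0 < c x
        rw [hcx]
        norm_num
      obtain ⟨k, hk⟩ := this
      have hLk : L k = x := (Finset.mem_filter.mp hk).2
      refine ⟨k, ?_, hLk⟩
      apply Finset.mem_coe.mpr
      exact Finset.mem_filter.mpr ⟨Finset.mem_univ _, hLk ▸ Finset.mem_coe.mp hxB, hLk ▸ hxr⟩
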